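/- Let (G, f, L) be a homogeneous flow stream network on n nodes with irreducible connection matrix L, and let E be a connection matrix adding bi-directional edges only between pairs of nodes on the same level (assumption (A4)). Let R = diag(r₁,…,rₙ) and let ρ(k) = s(L + kE + R) be the spectral bound with positive eigenvector x(k). Then ρ'(k) = −(Σ_{(i,j)∈S} (d/(d+q))^{f(i)} (x_i − x_j)²) / (Σ_i (d/(d+q))^{f(i)} x_i²) ≤ 0 for all k ≥ 0, where S is the set of pairs {i,j} with e_{ij} = e_{ji} = 1. -/

import Mathlib

open Matrix

/-- Spectral bound: maximum real part of the (complex) eigenvalues. -/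
noncomputable def specBound {n : ℕ} (M : Matrix (Fin n) (Fin n) ℝ) : ℝ :=
  sSup {t : ℝ | ∃ μ ∈ spectrum ℂ (M.map Complex.ofReal), μ.re = t}

/-- Irreducibility of a matrix (no nontrivial invariant subset of indices). -/
def MatIrreducible {n : ℕ} (M : Matrix (Fin n) (Fin n) ℝ) : Prop :=
  ∀ S : Finset (Fin n), S.Nonempty → S ≠ Finset.univ →
    ∃ i ∈ S, ∃ j, j ∉ S ∧ M j i ≠ 0

/-- For a homogeneous flow stream network with irreducible
connection matrix `L` and an edge-modification matrix `E` adding bi-directional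
edges only within levels (assumption (A4), with entries `0` or `1` as
indicators of added edges), the spectral bound `ρ(k) = s(L + kE + R)` satisfies
`ρ'(k) = −(Σ_{(i,j)∈S} (d/(d+q))^{f(i)} (x_i − x_j)²)/(Σ_i (d/(d+q))^{f(i)} x_i²) ≤ 0`,
where the sum over the set `S` of unordered added pairs is written as half the
ordered double sum weighted by the indicator entries of `E`. -/
theorem rho_deriv_homogeneous_flow_bidir {n : ℕ} (hn : 0 < n)
    (d q : ℝ) (hd : 0 < d) (hq : 0 < q)
    (f : Fin n → ℕ)
    (hattain : ∀ (i : Fin n) (m : ℕ), m ≤ f i → ∃ j, f j = m)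
    (L : Matrix (Fin n) (Fin n) ℝ)
    (hLcol : ∀ j, ∑ i, L i j = 0)
    (hL : ∀ i j : Fin n, i ≠ j →
      (L i j = 0 ∧ L j i = 0) ∨
      (f j = f i + 1 ∧ L j i = d + q ∧ L i j = d) ∨
      (f i = f j + 1 ∧ L i j = d + q ∧ L j i = d))
    (hirr : MatIrreducible L)
    (E : Matrix (Fin n) (Fin n) ℝ)
    (hEcol : ∀ j, ∑ i, E i j = 0)
    (hEsame : ∀ i j : Fin n, i ≠ j → f i = f j →
      E i j = E j i ∧ (E i j = 0 ∨ E i j = 1))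
    (hEdiff : ∀ i j : Fin n, i ≠ j → f i ≠ f j → E i j = 0 ∧ E j i = 0)
    (r : Fin n → ℝ) (hr : ∀ i, 0 ≤ r i)
    (ρ ρ' : ℝ → ℝ) (x x' : ℝ → Fin n → ℝ)
    (hx : ∀ k i, 0 < x k i)
    (hρspec : ∀ k : ℝ, 0 ≤ k →
      ρ k = specBound (L + k • E + Matrix.diagonal r))
    (heig : ∀ k : ℝ, (L + k • E + Matrix.diagonal r).mulVec (x k) = ρ k • x k)
    (hρ' : ∀ k : ℝ, HasDerivAt ρ (ρ' k) k)
    (hx' : ∀ (k : ℝ) (i : Fin n), HasDerivAt (fun t => x t i) (x' k i) k) :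
    ∀ k : ℝ, 0 ≤ k →
      ρ' k = -((∑ i, ∑ j, E i j * (d / (d + q)) ^ f i * (x k i - x k j) ^ 2) / 2) /
          (∑ i, (d / (d + q)) ^ f i * (x k i) ^ 2) ∧
        ρ' k ≤ 0 := by
  intro k hk
  have hdq : (0:ℝ) < d + q := by linarith
  set c : ℝ := d / (d + q) with hc
  have hc0 : 0 < c := div_pos hd hdq
  set v : Fin n → ℝ := fun i => c ^ f i with hv
  have hv0 : ∀ i, 0 < v i := fun i => pow_pos hc0 _
  set M : Matrix (Fin n) (Fin n) ℝ := L + k • E + Matrix.diagonal r with hM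
  have hMe : ∀ i j, M i j = L i j + k * E i j + (if i = j then r i else 0) := by
    intro i j
    simp [hM, Matrix.add_apply, Matrix.smul_apply, Matrix.diagonal_apply, smul_eq_mul]
  -- off-diagonal symmetry of E
  have hEsymm : ∀ i j, E i j = E j i := by
    intro i j
    by_cases hij : i = j
    · subst hij; rfl
    · by_cases hf : f i = f j
      · exact (hEsame i j hij hf).1
      · rw [(hEdiff i j hij hf).1, (hEdiff i j hij hf).2]
  have hErow : ∀ i, ∑ j, E i j = 0 := by
    intro i
    calc ∑ j, E i j = ∑ j, E j i := Finset.sum_congr rfl fun j _ => hEsymm i j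
    _ = 0 := hEcol i
  -- E i j * v i = E i j * v j
  have hEv : ∀ i j, E i j * v i = E i j * v j := by
    intro i j
    by_cases hij : i = j
    · subst hij; rfl
    · by_cases hf : f i = f j
      · simp [hv, hf]
      · rw [(hEdiff i j hij hf).1]; ring
  -- symmetry of v_i M_ij
  have hsym : ∀ i j, v i * M i j = v j * M j i := by
    intro i j
    by_cases hij : i = j
    · subst hij; rfl
    · have hij' : j ≠ i := fun h => hij h.symm
      rw [hMe, hMe, if_neg hij, if_neg hij']
      rcases hL i j hij with ⟨h1, h2⟩ | ⟨hf, h1, h2⟩ | ⟨hf, h1, h2⟩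
      · -- L entries zero
        rw [h1, h2, hEsymm j i]
        linear_combination k * hEv i j
      · -- f j = f i + 1
        have hfne : f i ≠ f j := by omega
        rw [(hEdiff i j hij hfne).1, (hEdiff j i hij' (Ne.symm hfne)).1, h1, h2]
        have : v j = v i * c := by rw [hv]; simp [hf, pow_succ]
        rw [this, hc]
        field_simp
        ring
      · have hfne : f i ≠ f j := by omega
        rw [(hEdiff i j hij hfne).1, (hEdiff j i hij' (Ne.symm hfne)).1, h1, h2]
        have : v i = v j * c := by rw [hv]; simp [hf, pow_succ]
        rw [this, hc]
        field_simp
        ring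
  -- eigen equation entrywise at any t
  have heig' : ∀ (t : ℝ) (i : Fin n),
      ∑ j, (L i j + t * E i j + (if i = j then r i else 0)) * x t j = ρ t * x t i := by
    intro t i
    have := congrFun (heig t) i
    simpa [Matrix.mulVec, dotProduct, Matrix.add_apply, Matrix.smul_apply,
      Matrix.diagonal_apply, smul_eq_mul, Pi.smul_apply] using this
  -- differentiate
  have key : ∀ i, (∑ j, E i j * x k j) + (∑ j, M i j * x' k j)
      = ρ' k * x k i + ρ k * x' k i := by
    intro i
    have h1 : HasDerivAt (fun t => ∑ j, (L i j + t * E i j + (if i = j then r i else 0)) * x t j)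
        (∑ j, (E i j * x k j + M i j * x' k j)) k := by
      apply HasDerivAt.fun_sum
      intro j _
      have hu : HasDerivAt (fun t : ℝ => L i j + t * E i j + (if i = j then r i else 0))
          (E i j) k := by
        have := ((hasDerivAt_id k).mul_const (E i j)).const_add (L i j)
        simpa using this.add_const (if i = j then r i else 0)
      have := hu.fun_mul (hx' k j)
      simpa [hMe] using this
    have h2 : HasDerivAt (fun t => ρ t * x t i) (ρ' k * x k i + ρ k * x' k i) k :=
      (hρ' k).mul (hx' k i)
    have heqf : (fun t => ∑ j, (L i j + t * E i j + (if i = j then r i else 0)) * x t j)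
        = fun t => ρ t * x t i := funext fun t => heig' t i
    rw [heqf] at h1
    have := h1.unique h2
    rw [← this, Finset.sum_add_distrib]
  -- weighted sum
  have hleft : ∀ j, ∑ i, v i * x k i * M i j = ρ k * (v j * x k j) := by
    intro j
    calc ∑ i, v i * x k i * M i j = ∑ i, v j * M j i * x k i := by
          apply Finset.sum_congr rfl
          intro i _
          rw [mul_comm (v i) (x k i), mul_assoc, hsym i j]; ring
    _ = v j * ∑ i, M j i * x k i := by rw [Finset.mul_sum]; apply Finset.sum_congr rfl; intros; ring
    _ = v j * (ρ k * x k j) := by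
          congr 1
          have := heig' k j
          simp only [hMe]
          exact this
    _ = ρ k * (v j * x k j) := by ring
  have main : ρ' k * (∑ i, v i * (x k i)^2) = ∑ i, ∑ j, v i * x k i * E i j * x k j := by
    have hsum := congrArg (fun F : Fin n → ℝ => ∑ i, v i * x k i * F i)
      (funext key : (fun i => (∑ j, E i j * x k j) + (∑ j, M i j * x' k j)) = _)
    beta_reduce at hsum
    have lhs_eq : ∑ i, v i * x k i * ((∑ j, E i j * x k j) + (∑ j, M i j * x' k j))
        = (∑ i, ∑ j, v i * x k i * E i j * x k j)
          + ∑ i, ∑ j, v i * x k i * M i j * x' k j := by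
      rw [← Finset.sum_add_distrib]
      apply Finset.sum_congr rfl
      intro i _
      rw [mul_add, Finset.mul_sum, Finset.mul_sum]
      congr 1 <;> (apply Finset.sum_congr rfl; intros; ring)
    have rhs_eq : ∑ i, v i * x k i * (ρ' k * x k i + ρ k * x' k i)
        = ρ' k * (∑ i, v i * (x k i)^2) + ρ k * ∑ i, v i * x k i * x' k i := by
      rw [Finset.mul_sum, Finset.mul_sum, ← Finset.sum_add_distrib]
      apply Finset.sum_congr rfl
      intros; ring
    have cross : ∑ i, ∑ j, v i * x k i * M i j * x' k j
        = ρ k * ∑ i, v i * x k i * x' k i := by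
      rw [Finset.sum_comm]
      rw [Finset.mul_sum]
      apply Finset.sum_congr rfl
      intro j _
      calc ∑ i, v i * x k i * M i j * x' k j = (∑ i, v i * x k i * M i j) * x' k j := by
            rw [Finset.sum_mul]
      _ = ρ k * (v j * x k j) * x' k j := by rw [hleft j]
      _ = ρ k * (v j * x k j * x' k j) := by ring
    rw [lhs_eq, rhs_eq, cross] at hsum
    linarith [hsum]
  -- combinatorial identity
  have hzero1 : ∑ i, ∑ j, E i j * v i * (x k i)^2 = 0 := by
    apply Finset.sum_eq_zero
    intro i _
    calc ∑ j, E i j * v i * (x k i)^2 = (∑ j, E i j) * (v i * (x k i)^2) := by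
          rw [Finset.sum_mul]; apply Finset.sum_congr rfl; intros; ring
    _ = 0 := by rw [hErow i, zero_mul]
  have hzero2 : ∑ i, ∑ j, E i j * v i * (x k j)^2 = 0 := by
    rw [Finset.sum_comm]
    apply Finset.sum_eq_zero
    intro j _
    calc ∑ i, E i j * v i * (x k j)^2 = ∑ i, E i j * v j * (x k j)^2 := by
          apply Finset.sum_congr rfl; intro i _; rw [hEv i j]
    _ = (∑ i, E i j) * (v j * (x k j)^2) := by
          rw [Finset.sum_mul]; apply Finset.sum_congr rfl; intros; ring
    _ = 0 := by rw [hEcol j, zero_mul]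
  have hnum : ∑ i, ∑ j, E i j * v i * (x k i - x k j)^2
      = -2 * ∑ i, ∑ j, v i * x k i * E i j * x k j := by
    have expand : ∀ i j : Fin n, E i j * v i * (x k i - x k j)^2
        = E i j * v i * (x k i)^2 + E i j * v i * (x k j)^2
          - 2 * (v i * x k i * E i j * x k j) := by intros; ring
    calc ∑ i, ∑ j, E i j * v i * (x k i - x k j)^2
        = (∑ i, ∑ j, E i j * v i * (x k i)^2) + (∑ i, ∑ j, E i j * v i * (x k j)^2)
          - 2 * ∑ i, ∑ j, v i * x k i * E i j * x k j := by
          rw [Finset.mul_sum, ← Finset.sum_add_distrib, ← Finset.sum_sub_distrib]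
          apply Finset.sum_congr rfl
          intro i _
          rw [Finset.mul_sum, ← Finset.sum_add_distrib, ← Finset.sum_sub_distrib]
          exact Finset.sum_congr rfl fun j _ => expand i j
    _ = -2 * ∑ i, ∑ j, v i * x k i * E i j * x k j := by rw [hzero1, hzero2]; ring
  -- positivity of denominator
  have hD : 0 < ∑ i, v i * (x k i)^2 := by
    apply Finset.sum_pos
    · intro i _
      exact mul_pos (hv0 i) (pow_pos (hx k i) 2)
    · exact Finset.univ_nonempty_iff.mpr ⟨⟨0, hn⟩⟩
  -- nonnegativity of numerator
  have hNnn : 0 ≤ ∑ i, ∑ j, E i j * v i * (x k i - x k j)^2 := by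
    apply Finset.sum_nonneg
    intro i _
    apply Finset.sum_nonneg
    intro j _
    by_cases hij : i = j
    · subst hij; simp
    · have hE0 : 0 ≤ E i j := by
        by_cases hf : f i = f j
        · rcases (hEsame i j hij hf).2 with h | h <;> rw [h] <;> norm_num
        · rw [(hEdiff i j hij hf).1]
      positivity
  -- conclude
  have hformula : ρ' k = -((∑ i, ∑ j, E i j * v i * (x k i - x k j)^2) / 2)
      / (∑ i, v i * (x k i)^2) := by
    rw [hnum, eq_div_iff (ne_of_gt hD)]
    linarith [main]
  constructor
  · exact hformula
  · rw [hformula]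
    apply div_nonpos_of_nonpos_of_nonneg
    · linarith
    · exact le_of_lt hD
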